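/- Let (G,<) be an ordered group and let (N,H) be a convex jump, i.e., N ⊊ H are convex subgroups of G with no convex subgroup strictly between them. Then N is a normal subgroup of H and the ordered quotient group H/N is archimedean, hence order-isomorphic to a subgroup of the additive group of real numbers. -/

import Mathlib

/-- A subgroup `H` of a group with an order `le` is convex if whenever `x, z ∈ H`
and `x ≤ y ≤ z`, also `y ∈ H`. -/
def IsConvexSubgroup {G : Type*} [Group G] (le : G → G → Prop) (H : Subgroup G) : Prop :=
  ∀ x z : G, x ∈ H → z ∈ H → ∀ y : G, le x y → le y z → y ∈ H

section Aux

variable {G : Type*} [Group G] [LinearOrder G]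
    [CovariantClass G G (· * ·) (· ≤ ·)]
    [CovariantClass G G (Function.swap (· * ·)) (· ≤ ·)]

/-- Any two convex subgroups of an ordered group are comparable. -/
theorem convexChain {A B : Subgroup G} (hA : IsConvexSubgroup (· ≤ ·) A)
    (hB : IsConvexSubgroup (· ≤ ·) B) : A ≤ B ∨ B ≤ A := by
  by_cases hAB : A ≤ B
  · exact Or.inl hAB
  · right
    rw [SetLike.not_le_iff_exists] at hAB
    obtain ⟨a, haA, haB⟩ := hAB
    intro b hbB
    set α := max a a⁻¹ with hα
    have hαA : α ∈ A := by
      rcases max_cases a a⁻¹ with ⟨h, _⟩ | ⟨h, _⟩ <;> rw [hα, h]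
      · exact haA
      · exact A.inv_mem haA
    have h1α : 1 ≤ α := by
      rcases le_total 1 a with h | h
      · exact le_max_of_le_left h
      · exact le_max_of_le_right (one_le_inv'.2 h)
    have hαinv_le_a : α⁻¹ ≤ a := by
      have : a⁻¹ ≤ α := le_max_right _ _
      calc α⁻¹ ≤ (a⁻¹)⁻¹ := inv_le_inv_iff.2 this
        _ = a := inv_inv a
    have hαB : α ∉ B := fun hc => haB (hB α⁻¹ α (B.inv_mem hc) hc a hαinv_le_a (le_max_left _ _))
    set β := max b b⁻¹ with hβ
    have h1β : 1 ≤ β := by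
      rcases le_total 1 b with h | h
      · exact le_max_of_le_left h
      · exact le_max_of_le_right (one_le_inv'.2 h)
    have hβB : β ∈ B := by
      rcases max_cases b b⁻¹ with ⟨h, _⟩ | ⟨h, _⟩ <;> rw [hβ, h]
      · exact hbB
      · exact B.inv_mem hbB
    have hβα : β ≤ α := by
      by_contra hc
      push_neg at hc
      exact hαB (hB β⁻¹ β (B.inv_mem hβB) hβB α (le_trans (inv_le_one'.2 h1β) h1α) hc.le)
    have hαinv_le_b : α⁻¹ ≤ b := by
      have hβinv : β⁻¹ ≤ b := by
        have : b⁻¹ ≤ β := le_max_right _ _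
        calc β⁻¹ ≤ (b⁻¹)⁻¹ := inv_le_inv_iff.2 this
          _ = b := inv_inv b
      exact le_trans (inv_le_inv_iff.2 hβα) hβinv
    exact hA α⁻¹ α (A.inv_mem hαA) hαA b hαinv_le_b (le_trans (le_max_left _ _) hβα)

/-- The conjugate `h N h⁻¹` of a subgroup, described as `{x | h⁻¹ x h ∈ N}`. -/
def conjBy (N : Subgroup G) (h : G) : Subgroup G where
  carrier := {x | h⁻¹ * x * h ∈ N}
  one_mem' := by simpa using N.one_mem
  mul_mem' := by
    intro x y hx hy
    have hxy : h⁻¹ * (x * y) * h = (h⁻¹ * x * h) * (h⁻¹ * y * h) := by group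
    show h⁻¹ * (x * y) * h ∈ N
    rw [hxy]; exact N.mul_mem hx hy
  inv_mem' := by
    intro x hx
    have hxi : h⁻¹ * x⁻¹ * h = (h⁻¹ * x * h)⁻¹ := by group
    show h⁻¹ * x⁻¹ * h ∈ N
    rw [hxi]; exact N.inv_mem hx

theorem mem_conjBy {N : Subgroup G} {h x : G} : x ∈ conjBy N h ↔ h⁻¹ * x * h ∈ N := Iff.rfl

theorem conjBy_convex {N : Subgroup G} (hN : IsConvexSubgroup (· ≤ ·) N) (h : G) :
    IsConvexSubgroup (· ≤ ·) (conjBy N h) := by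
  intro x z hx hz y hxy hyz
  refine hN _ _ hx hz _ ?_ ?_
  · exact mul_le_mul_left (mul_le_mul_right hxy _) _
  · exact mul_le_mul_left (mul_le_mul_right hyz _) _

theorem conjBy_flip {N : Subgroup G} {h : G} (hle : conjBy N h ≤ N) : N ≤ conjBy N h⁻¹ := by
  intro x hx
  have hmem : h * x * h⁻¹ ∈ conjBy N h := by
    rw [mem_conjBy]
    have : h⁻¹ * (h * x * h⁻¹) * h = x := by group
    rw [this]; exact hx
  rw [mem_conjBy, inv_inv]
  exact hle hmem

/-- The convex subgroup of elements "bounded by powers of `g`". -/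
def boundedBy (g : G) : Subgroup G where
  carrier := {x | ∃ k : ℕ, x ≤ g ^ k ∧ x⁻¹ ≤ g ^ k}
  one_mem' := ⟨0, by simp⟩
  mul_mem' := by
    intro x y hx hy
    obtain ⟨j, hj1, hj2⟩ := hx
    obtain ⟨k, hk1, hk2⟩ := hy
    refine ⟨j + k, ?_, ?_⟩
    · rw [pow_add]; exact mul_le_mul' hj1 hk1
    · rw [mul_inv_rev, add_comm, pow_add]; exact mul_le_mul' hk2 hj2
  inv_mem' := by
    intro x hx
    obtain ⟨k, hk1, hk2⟩ := hx
    exact ⟨k, hk2, by rwa [inv_inv]⟩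

theorem mem_boundedBy {g x : G} : x ∈ boundedBy g ↔ ∃ k : ℕ, x ≤ g ^ k ∧ x⁻¹ ≤ g ^ k := Iff.rfl

theorem boundedBy_convex {g : G} (hg : 1 ≤ g) : IsConvexSubgroup (· ≤ ·) (boundedBy g) := by
  intro x z hx hz y hxy hyz
  obtain ⟨j, _, hj2⟩ := hx
  obtain ⟨k, hk1, _⟩ := hz
  refine ⟨j + k, ?_, ?_⟩
  · exact le_trans hyz (le_trans hk1 (pow_le_pow_right' hg (Nat.le_add_left _ _)))
  · have : y⁻¹ ≤ x⁻¹ := inv_le_inv_iff.2 hxy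
    exact le_trans this (le_trans hj2 (pow_le_pow_right' hg (Nat.le_add_right _ _)))

theorem self_mem_boundedBy {g : G} (hg : 1 ≤ g) : g ∈ boundedBy g :=
  ⟨1, by rw [pow_one], by rw [pow_one]; exact le_trans (inv_le_one'.2 hg) hg⟩

/- Shuffle inequalities. -/
theorem commle_pow {a b : G} (h : b * a ≤ a * b) : ∀ n : ℕ, b ^ n * a ≤ a * b ^ n := by
  intro n
  induction n with
  | zero => simp
  | succ n ih =>
    calc b ^ (n + 1) * a = b * (b ^ n * a) := by rw [pow_succ']; group
      _ ≤ b * (a * b ^ n) := mul_le_mul_right ih b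
      _ = (b * a) * b ^ n := by group
      _ ≤ (a * b) * b ^ n := mul_le_mul_left h _
      _ = a * b ^ (n + 1) := by rw [pow_succ']; group

theorem prod_pow_le {a b : G} (h : b * a ≤ a * b) : ∀ n : ℕ, (a * b) ^ n ≤ a ^ n * b ^ n := by
  intro n
  induction n with
  | zero => simp
  | succ n ih =>
    calc (a * b) ^ (n + 1) = (a * b) ^ n * (a * b) := pow_succ _ _
      _ ≤ (a ^ n * b ^ n) * (a * b) := mul_le_mul_left ih _
      _ = a ^ n * (b ^ n * a) * b := by group
      _ ≤ a ^ n * (a * b ^ n) * b := mul_le_mul_left (mul_le_mul_right (commle_pow h n) _) _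
      _ = a ^ (n + 1) * b ^ (n + 1) := by rw [pow_succ, pow_succ']; group

theorem pow_prod_le {a b : G} (h : b * a ≤ a * b) : ∀ n : ℕ, b ^ n * a ^ n ≤ (a * b) ^ n := by
  intro n
  induction n with
  | zero => simp
  | succ n ih =>
    calc b ^ (n + 1) * a ^ (n + 1) = (b ^ (n + 1) * a) * a ^ n := by rw [pow_succ]; group
      _ ≤ (a * b ^ (n + 1)) * a ^ n := mul_le_mul_left (commle_pow h (n + 1)) _
      _ = (a * b) * (b ^ n * a ^ n) := by rw [pow_succ']; group
      _ ≤ (a * b) * (a * b) ^ n := mul_le_mul_right ih _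
      _ = (a * b) ^ (n + 1) := (pow_succ' _ _).symm

/- Mirrored shuffle inequalities. -/
theorem commge_pow {a b : G} (h : a * b ≤ b * a) : ∀ n : ℕ, a * b ^ n ≤ b ^ n * a := by
  intro n
  induction n with
  | zero => simp
  | succ n ih =>
    calc a * b ^ (n + 1) = (a * b) * b ^ n := by rw [pow_succ']; group
      _ ≤ (b * a) * b ^ n := mul_le_mul_left h _
      _ = b * (a * b ^ n) := by group
      _ ≤ b * (b ^ n * a) := mul_le_mul_right ih b
      _ = b ^ (n + 1) * a := by rw [pow_succ']; group

theorem prod_pow_ge {a b : G} (h : a * b ≤ b * a) : ∀ n : ℕ, a ^ n * b ^ n ≤ (a * b) ^ n := by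
  intro n
  induction n with
  | zero => simp
  | succ n ih =>
    calc a ^ (n + 1) * b ^ (n + 1) = a ^ n * (a * b ^ n) * b := by rw [pow_succ, pow_succ']; group
      _ ≤ a ^ n * (b ^ n * a) * b := mul_le_mul_left (mul_le_mul_right (commge_pow h n) _) _
      _ = (a ^ n * b ^ n) * (a * b) := by group
      _ ≤ (a * b) ^ n * (a * b) := mul_le_mul_left ih _
      _ = (a * b) ^ (n + 1) := (pow_succ _ _).symm

theorem pow_prod_ge {a b : G} (h : a * b ≤ b * a) : ∀ n : ℕ, (a * b) ^ n ≤ b ^ n * a ^ n := by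
  intro n
  induction n with
  | zero => simp
  | succ n ih =>
    calc (a * b) ^ (n + 1) = (a * b) * (a * b) ^ n := by rw [pow_succ']
      _ ≤ (a * b) * (b ^ n * a ^ n) := mul_le_mul_right ih _
      _ = (a * b ^ (n + 1)) * a ^ n := by rw [pow_succ']; group
      _ ≤ (b ^ (n + 1) * a) * a ^ n := mul_le_mul_left (commge_pow h (n + 1)) _
      _ = b ^ (n + 1) * a ^ (n + 1) := by rw [pow_succ']; group

/- Monotonicity of integer powers of a fixed element. -/
theorem one_le_zpow_my {g : G} (hg : 1 ≤ g) {t : ℤ} (ht : 0 ≤ t) : 1 ≤ g ^ t := by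
  obtain ⟨n, rfl⟩ := Int.eq_ofNat_of_zero_le ht
  rw [zpow_natCast]
  exact Left.one_le_pow_of_le hg n

theorem zpow_mono_my {g : G} (hg : 1 ≤ g) {m n : ℤ} (h : m ≤ n) : g ^ m ≤ g ^ n := by
  have hn : m + (n - m) = n := by ring
  rw [← hn, zpow_add]
  exact le_mul_of_one_le_right' (one_le_zpow_my hg (by omega))

theorem zpow_strict_my {g : G} (hg : 1 < g) {m n : ℤ} (h : m < n) : g ^ m < g ^ n := by
  have hn : m + (n - m) = n := by ring
  rw [← hn, zpow_add]
  refine lt_mul_of_one_lt_right' _ ?_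
  have h1 : g ^ (1 : ℤ) ≤ g ^ (n - m) := zpow_mono_my hg.le (by omega)
  rw [zpow_one] at h1
  exact lt_of_lt_of_le hg h1

theorem zpow_reflect_my {g : G} (hg : 1 < g) {m n : ℤ} (h : g ^ m ≤ g ^ n) : m ≤ n := by
  by_contra hc
  push_neg at hc
  exact absurd h (not_le.2 (zpow_strict_my hg hc))

end Aux

open Filter Topology in
/-- If `(N, H)` is a convex jump in an ordered group `G`, then `N` is
normal in `H` and the ordered quotient `H/N` is archimedean, hence order-isomorphic to a
subgroup of `(ℝ, +)`; equivalently there is a monotone group homomorphism `f : H → ℝ`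
with kernel exactly `N`. -/
theorem convex_jump_archimedean (G : Type*) [Group G] [LinearOrder G]
    [CovariantClass G G (· * ·) (· ≤ ·)]
    [CovariantClass G G (Function.swap (· * ·)) (· ≤ ·)]
    (N H : Subgroup G) (hNH : N < H)
    (hN : IsConvexSubgroup (· ≤ ·) N) (hH : IsConvexSubgroup (· ≤ ·) H)
    (hjump : ∀ M : Subgroup G, IsConvexSubgroup (· ≤ ·) M → N ≤ M → M ≤ H →
      M = N ∨ M = H) :
    (∀ h ∈ H, ∀ n ∈ N, h * n * h⁻¹ ∈ N) ∧
    ∃ f : H → ℝ,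
      (∀ a b : H, f (a * b) = f a + f b) ∧
      (∀ a b : H, (a : G) ≤ (b : G) → f a ≤ f b) ∧
      (∀ a : H, f a = 0 ↔ (a : G) ∈ N) := by
  classical
  -- a witness in `H \ N`
  obtain ⟨x₀, hx₀H, hx₀N⟩ : ∃ x ∈ H, x ∉ N := SetLike.exists_of_lt hNH
  ---------------------------------------------------------------------------
  -- Part 1 : normality of `N` in `H`.
  ---------------------------------------------------------------------------
  have key : ∀ h ∈ H, N ≤ conjBy N h := by
    intro h hh
    by_contra hcon
    have hKN : conjBy N h ≤ N := (convexChain hN (conjBy_convex hN h)).resolve_left hcon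
    have hNK' : N ≤ conjBy N h⁻¹ := conjBy_flip hKN
    have hKH : conjBy N h⁻¹ ≤ H := by
      intro x hx
      rw [mem_conjBy, inv_inv] at hx
      have hx' : h * x * h⁻¹ ∈ H := hNH.le hx
      have : x = h⁻¹ * (h * x * h⁻¹) * h := by group
      rw [this]
      exact H.mul_mem (H.mul_mem (H.inv_mem hh) hx') hh
    rcases hjump _ (conjBy_convex hN h⁻¹) hNK' hKH with heq | heq
    · -- conjBy N h⁻¹ = N  ⟹  N ≤ conjBy N h, contradiction
      have : N ≤ conjBy N (h⁻¹)⁻¹ := conjBy_flip (le_of_eq heq)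
      rw [inv_inv] at this
      exact hcon this
    · -- conjBy N h⁻¹ = H  ⟹  x₀ ∈ N, contradiction
      have hw : h⁻¹ * x₀ * h ∈ H := H.mul_mem (H.mul_mem (H.inv_mem hh) hx₀H) hh
      have hw' : h⁻¹ * x₀ * h ∈ conjBy N h⁻¹ := heq ▸ hw
      rw [mem_conjBy, inv_inv] at hw'
      have : h * (h⁻¹ * x₀ * h) * h⁻¹ = x₀ := by group
      rw [this] at hw'
      exact hx₀N hw'
  have part1 : ∀ h ∈ H, ∀ n ∈ N, h * n * h⁻¹ ∈ N := by
    intro h hh n hn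
    have := key h⁻¹ (H.inv_mem hh) hn
    rw [mem_conjBy, inv_inv] at this
    exact this
  refine ⟨part1, ?_⟩
  ---------------------------------------------------------------------------
  -- Part 2 : the Hölder-style homomorphism to `ℝ`.
  ---------------------------------------------------------------------------
  -- the reference element `g ∈ H \ N`, `1 < g`.
  have hmaxH : max x₀ x₀⁻¹ ∈ H := by
    rcases max_cases x₀ x₀⁻¹ with ⟨h, _⟩ | ⟨h, _⟩ <;> rw [h]
    · exact hx₀H
    · exact H.inv_mem hx₀H
  set g : G := max x₀ x₀⁻¹ with hgdef
  have hgH : g ∈ H := hmaxH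
  have h1g : 1 ≤ g := by
    rcases le_total 1 x₀ with h | h
    · exact le_max_of_le_left h
    · exact le_max_of_le_right (one_le_inv'.2 h)
  have hgN : g ∉ N := by
    intro hc
    refine hx₀N (hN g⁻¹ g (N.inv_mem hc) hc x₀ ?_ (le_max_left _ _))
    have : x₀⁻¹ ≤ g := le_max_right _ _
    calc g⁻¹ ≤ (x₀⁻¹)⁻¹ := inv_le_inv_iff.2 this
      _ = x₀ := inv_inv x₀
  have hg1 : 1 < g := lt_of_le_of_ne h1g (fun hc => hgN (hc ▸ N.one_mem))
  -- the archimedean property relative to any `z ∈ H \ N`, `1 ≤ z`.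
  have arch : ∀ z : G, z ∈ H → z ∉ N → 1 ≤ z →
      ∀ x ∈ H, ∃ k : ℕ, x ≤ z ^ k ∧ x⁻¹ ≤ z ^ k := by
    intro z hzH hzN hz1 x hx
    have hBH : boundedBy z ≤ H := by
      intro y hy
      obtain ⟨k, hk1, hk2⟩ := hy
      have hlow : (z ^ k)⁻¹ ≤ y := by
        calc (z ^ k)⁻¹ ≤ (y⁻¹)⁻¹ := inv_le_inv_iff.2 hk2
          _ = y := inv_inv y
      exact hH ((z ^ k)⁻¹) (z ^ k) (H.inv_mem (H.pow_mem hzH k)) (H.pow_mem hzH k) y hlow hk1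
    have hNB : N ≤ boundedBy z := by
      rcases convexChain hN (boundedBy_convex hz1) with h | h
      · exact h
      · exact absurd (h (self_mem_boundedBy hz1)) hzN
    rcases hjump _ (boundedBy_convex hz1) hNB hBH with heq | heq
    · exact absurd (heq ▸ self_mem_boundedBy hz1) hzN
    · exact (heq ▸ hx : x ∈ boundedBy z)
  -- every element of `N` lies strictly between `g⁻¹` and `g`.
  have hsmall : ∀ x ∈ N, g⁻¹ ≤ x ∧ x < g := by
    intro x hx
    constructor
    · by_contra hc
      push_neg at hc
      have hx' : g ≤ x⁻¹ := by
        calc g = (g⁻¹)⁻¹ := (inv_inv g).symm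
          _ ≤ x⁻¹ := inv_le_inv_iff.2 hc.le
      exact hgN (hN 1 x⁻¹ N.one_mem (N.inv_mem hx) g h1g hx')
    · by_contra hc
      push_neg at hc
      exact hgN (hN 1 x N.one_mem hx g h1g hc)
  -- the greatest `m : ℤ` with `g ^ m ≤ x`, for `x ∈ H`.
  have exists_mu : ∀ x : G, x ∈ H → ∃ m : ℤ, g ^ m ≤ x ∧ ∀ m' : ℤ, g ^ m' ≤ x → m' ≤ m := by
    intro x hx
    obtain ⟨k, hk1, hk2⟩ := arch g hgH hgN h1g x hx
    have hbdd : ∃ b : ℤ, ∀ m : ℤ, g ^ m ≤ x → m ≤ b := by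
      refine ⟨(k : ℤ), fun m hm => ?_⟩
      refine zpow_reflect_my hg1 ?_
      calc g ^ m ≤ x := hm
        _ ≤ g ^ k := hk1
        _ = g ^ (k : ℤ) := (zpow_natCast g k).symm
    have hinh : ∃ m : ℤ, g ^ m ≤ x := by
      refine ⟨-(k : ℤ), ?_⟩
      have : x⁻¹ ≤ g ^ (k : ℤ) := by rw [zpow_natCast]; exact hk2
      calc g ^ (-(k : ℤ)) = (g ^ (k : ℤ))⁻¹ := zpow_neg g _
        _ ≤ (x⁻¹)⁻¹ := inv_le_inv_iff.2 this
        _ = x := inv_inv x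
    obtain ⟨m, hm, hmax⟩ := Int.exists_greatest_of_bdd hbdd hinh
    exact ⟨m, hm, hmax⟩
  -- `μ a n` : greatest `m` with `g ^ m ≤ (a : G) ^ n`.
  let μ : H → ℕ → ℤ := fun a n => Classical.choose (exists_mu ((a : G) ^ n) (H.pow_mem a.2 n))
  have hμ1 : ∀ (a : H) (n : ℕ), g ^ (μ a n) ≤ (a : G) ^ n :=
    fun a n => (Classical.choose_spec (exists_mu ((a : G) ^ n) (H.pow_mem a.2 n))).1
  have hμmax : ∀ (a : H) (n : ℕ) (m : ℤ), g ^ m ≤ (a : G) ^ n → m ≤ μ a n :=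
    fun a n => (Classical.choose_spec (exists_mu ((a : G) ^ n) (H.pow_mem a.2 n))).2
  have hμ2 : ∀ (a : H) (n : ℕ), (a : G) ^ n < g ^ (μ a n + 1) := by
    intro a n
    by_contra hc
    push_neg at hc
    exact absurd (hμmax a n _ hc) (by omega)
  -- upper bound on `μ` via `g ^ r` bounds.
  have hμub : ∀ (a : H) (n : ℕ) (r : ℤ), (a : G) ^ n ≤ g ^ r → μ a n ≤ r := by
    intro a n r h
    exact zpow_reflect_my hg1 (le_trans (hμ1 a n) h)
  -- superadditivity of `μ a`.
  have hμsuper : ∀ (a : H) (p q : ℕ), μ a p + μ a q ≤ μ a (p + q) := by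
    intro a p q
    refine hμmax a (p + q) _ ?_
    calc g ^ (μ a p + μ a q) = g ^ (μ a p) * g ^ (μ a q) := zpow_add g _ _
      _ ≤ (a : G) ^ p * (a : G) ^ q := mul_le_mul' (hμ1 a p) (hμ1 a q)
      _ = (a : G) ^ (p + q) := (pow_add _ _ _).symm
  -- linear bounds on `μ a n`.
  have hμbounds : ∀ a : H, ∃ k : ℕ, ∀ n : ℕ, -(k : ℤ) * n ≤ μ a n ∧ μ a n ≤ (k : ℤ) * n := by
    intro a
    obtain ⟨k, hk1, hk2⟩ := arch g hgH hgN h1g (a : G) a.2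
    refine ⟨k, fun n => ⟨?_, ?_⟩⟩
    · refine hμmax a n _ ?_
      have h1 : ((a : G)⁻¹) ^ n ≤ (g ^ k) ^ n := pow_le_pow_left' hk2 n
      have h2 : ((g ^ k) ^ n)⁻¹ ≤ (((a : G)⁻¹) ^ n)⁻¹ := inv_le_inv_iff.2 h1
      have h3 : (((a : G)⁻¹) ^ n)⁻¹ = (a : G) ^ n := by
        rw [inv_pow, inv_inv]
      rw [h3] at h2
      calc g ^ (-(k : ℤ) * n) = (g ^ ((k : ℤ) * n))⁻¹ := by rw [← zpow_neg]; ring_nf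
        _ = ((g ^ k) ^ n)⁻¹ := by
            rw [← zpow_natCast g k, ← zpow_natCast (g ^ (k:ℤ)) n, ← zpow_mul]
        _ ≤ (a : G) ^ n := h2
    · refine hμub a n _ ?_
      have h1 : (a : G) ^ n ≤ (g ^ k) ^ n := pow_le_pow_left' hk1 n
      calc (a : G) ^ n ≤ (g ^ k) ^ n := h1
        _ = g ^ ((k : ℤ) * n) := by
            rw [← zpow_natCast g k, ← zpow_natCast (g ^ (k:ℤ)) n, ← zpow_mul]
  -- the subadditive sequences.
  have hsub : ∀ a : H, Subadditive (fun n => -(μ a n : ℝ)) := by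
    intro a m n
    dsimp only
    have := hμsuper a m n
    have h' : (μ a m : ℝ) + (μ a n : ℝ) ≤ (μ a (m + n) : ℝ) := by exact_mod_cast this
    linarith
  have hbdd : ∀ a : H, BddBelow (Set.range fun n : ℕ => (-(μ a n : ℝ)) / n) := by
    intro a
    obtain ⟨k, hk⟩ := hμbounds a
    refine ⟨-(k : ℝ), fun x hx => ?_⟩
    obtain ⟨n, rfl⟩ := hx
    dsimp only
    rcases Nat.eq_zero_or_pos n with rfl | hn
    · have h0 : (0:ℝ) ≤ (k:ℝ) := Nat.cast_nonneg k
      simpa using h0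
    · have h1 : (μ a n : ℝ) ≤ (k : ℝ) * n := by exact_mod_cast (hk n).2
      have hn' : (0 : ℝ) < n := by exact_mod_cast hn
      rw [neg_div, le_neg, div_le_iff₀ hn']
      linarith
  -- definition of `f`.
  set f : H → ℝ := fun a => -(hsub a).lim with hfdef
  have hftend : ∀ a : H, Tendsto (fun n : ℕ => (μ a n : ℝ) / n) atTop (𝓝 (f a)) := by
    intro a
    have := (hsub a).tendsto_lim (hbdd a)
    have h2 := this.neg
    simp only [neg_div, neg_neg] at h2 ⊢
    exact h2
  have hflb : ∀ (a : H) (n : ℕ), n ≠ 0 → (μ a n : ℝ) / n ≤ f a := by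
    intro a n hn
    have := (hsub a).lim_le_div (hbdd a) hn
    rw [hfdef]
    rw [neg_div] at this
    linarith
  -- additivity.
  have hadd : ∀ a b : H, f (a * b) = f a + f b := by
    intro a b
    have hco : ((a * b : H) : G) = (a : G) * (b : G) := rfl
    -- key inequalities for every n
    have hkey : ∀ n : ℕ, μ a n + μ b n ≤ μ (a * b) n ∧ μ (a * b) n ≤ μ a n + μ b n + 2 := by
      intro n
      rcases le_total ((b : G) * (a : G)) ((a : G) * (b : G)) with hcase | hcase
      · constructor
        · refine hμmax (a * b) n _ ?_
          calc g ^ (μ a n + μ b n) = g ^ (μ b n + μ a n) := by rw [add_comm]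
            _ = g ^ (μ b n) * g ^ (μ a n) := zpow_add g _ _
            _ ≤ (b : G) ^ n * (a : G) ^ n := mul_le_mul' (hμ1 b n) (hμ1 a n)
            _ ≤ ((a : G) * (b : G)) ^ n := pow_prod_le hcase n
            _ = ((a * b : H) : G) ^ n := by rw [hco]
        · refine hμub (a * b) n _ ?_
          calc ((a * b : H) : G) ^ n = ((a : G) * (b : G)) ^ n := by rw [hco]
            _ ≤ (a : G) ^ n * (b : G) ^ n := prod_pow_le hcase n
            _ ≤ g ^ (μ a n + 1) * g ^ (μ b n + 1) :=
                mul_le_mul' (hμ2 a n).le (hμ2 b n).le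
            _ = g ^ (μ a n + μ b n + 2) := by rw [← zpow_add]; ring_nf
      · constructor
        · refine hμmax (a * b) n _ ?_
          calc g ^ (μ a n + μ b n) = g ^ (μ a n) * g ^ (μ b n) := zpow_add g _ _
            _ ≤ (a : G) ^ n * (b : G) ^ n := mul_le_mul' (hμ1 a n) (hμ1 b n)
            _ ≤ ((a : G) * (b : G)) ^ n := prod_pow_ge hcase n
            _ = ((a * b : H) : G) ^ n := by rw [hco]
        · refine hμub (a * b) n _ ?_
          calc ((a * b : H) : G) ^ n = ((a : G) * (b : G)) ^ n := by rw [hco]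
            _ ≤ (b : G) ^ n * (a : G) ^ n := pow_prod_ge hcase n
            _ ≤ g ^ (μ b n + 1) * g ^ (μ a n + 1) :=
                mul_le_mul' (hμ2 b n).le (hμ2 a n).le
            _ = g ^ (μ a n + μ b n + 2) := by rw [← zpow_add]; ring_nf
    -- pass to the limit
    have hlow : ∀ n : ℕ, (μ a n : ℝ) / n + (μ b n : ℝ) / n ≤ (μ (a * b) n : ℝ) / n := by
      intro n
      rcases Nat.eq_zero_or_pos n with rfl | hn
      · simp
      · have hn' : (0 : ℝ) < n := by exact_mod_cast hn
        rw [← add_div, div_le_div_iff_of_pos_right hn']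
        exact_mod_cast (hkey n).1
    have hhigh : ∀ n : ℕ, (μ (a * b) n : ℝ) / n ≤ (μ a n : ℝ) / n + (μ b n : ℝ) / n + 2 / n := by
      intro n
      rcases Nat.eq_zero_or_pos n with rfl | hn
      · simp
      · have hn' : (0 : ℝ) < n := by exact_mod_cast hn
        rw [← add_div, ← add_div, div_le_div_iff_of_pos_right hn']
        exact_mod_cast (hkey n).2
    have htend_ab : Tendsto (fun n : ℕ => (μ (a * b) n : ℝ) / n) atTop (𝓝 (f a + f b)) := by
      have h1 : Tendsto (fun n : ℕ => (μ a n : ℝ) / n + (μ b n : ℝ) / n)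
          atTop (𝓝 (f a + f b)) := (hftend a).add (hftend b)
      have h2 : Tendsto (fun n : ℕ => (μ a n : ℝ) / n + (μ b n : ℝ) / n + 2 / n)
          atTop (𝓝 (f a + f b)) := by
        have h3 : Tendsto (fun n : ℕ => 2 / (n : ℝ)) atTop (𝓝 0) :=
          tendsto_const_div_atTop_nhds_zero_nat 2
        simpa using h1.add h3
      exact tendsto_of_tendsto_of_tendsto_of_le_of_le h1 h2 hlow hhigh
    exact tendsto_nhds_unique (hftend (a * b)) htend_ab
  -- `f 1 = 0`.
  have hf1 : f 1 = 0 := by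
    have := hadd 1 1
    rw [mul_one] at this
    linarith
  -- monotonicity.
  have hmono : ∀ a b : H, (a : G) ≤ (b : G) → f a ≤ f b := by
    intro a b hab
    have hμle : ∀ n : ℕ, μ a n ≤ μ b n := by
      intro n
      refine hμmax b n _ (le_trans (hμ1 a n) ?_)
      exact pow_le_pow_left' hab n
    refine le_of_tendsto_of_tendsto' (hftend a) (hftend b) ?_
    intro n
    rcases Nat.eq_zero_or_pos n with rfl | hn
    · simp
    · have hn' : (0 : ℝ) < n := by exact_mod_cast hn
      rw [div_le_div_iff_of_pos_right hn']
      exact_mod_cast hμle n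
  -- kernel characterization.
  have hker : ∀ a : H, f a = 0 ↔ (a : G) ∈ N := by
    intro a
    constructor
    · -- `f a = 0 → a ∈ N`
      intro hfa
      by_contra haN
      rcases lt_trichotomy (a : G) 1 with hlt | heq | hgt
      · -- use `a⁻¹`
        have hinvN : ((a⁻¹ : H) : G) ∉ N := by
          intro hc
          refine haN ?_
          have : (((a⁻¹ : H) : G))⁻¹ ∈ N := N.inv_mem hc
          simpa using this
        have h1inv : 1 ≤ ((a⁻¹ : H) : G) := by
          have : (a : G) ≤ 1 := hlt.le
          simpa using one_le_inv'.2 this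
        obtain ⟨k, hk1, _⟩ := arch ((a⁻¹ : H) : G) (a⁻¹).2 hinvN h1inv g hgH
        have hk0 : k ≠ 0 := by
          intro hc
          rw [hc, pow_zero] at hk1
          exact absurd hk1 (not_le.2 hg1)
        have hμk : (1 : ℤ) ≤ μ a⁻¹ k := by
          refine hμmax a⁻¹ k 1 ?_
          rw [zpow_one]
          exact hk1
        have hfa' : (1 : ℝ) / k ≤ f a⁻¹ := by
          refine le_trans ?_ (hflb a⁻¹ k hk0)
          have hk' : (0 : ℝ) < k := by
            exact_mod_cast Nat.pos_of_ne_zero hk0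
          rw [div_le_div_iff_of_pos_right hk']
          exact_mod_cast hμk
        have hsum : f a + f a⁻¹ = 0 := by
          have := hadd a a⁻¹
          rw [mul_inv_cancel, hf1] at this
          linarith
        have hkpos : (0 : ℝ) < 1 / (k : ℝ) := by
          have hk' : (0 : ℝ) < k := by exact_mod_cast Nat.pos_of_ne_zero hk0
          positivity
        have h2 : f a⁻¹ = 0 := by rw [hfa, zero_add] at hsum; exact hsum
        rw [h2] at hfa'
        exact absurd hfa' (not_le.2 hkpos)
      · exact haN (by rw [heq]; exact N.one_mem)
      · obtain ⟨k, hk1, _⟩ := arch ((a : H) : G) a.2 haN hgt.le g hgH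
        have hk0 : k ≠ 0 := by
          intro hc
          rw [hc, pow_zero] at hk1
          exact absurd hk1 (not_le.2 hg1)
        have hμk : (1 : ℤ) ≤ μ a k := by
          refine hμmax a k 1 ?_
          rw [zpow_one]
          exact hk1
        have hfa' : (1 : ℝ) / k ≤ f a := by
          refine le_trans ?_ (hflb a k hk0)
          have hk' : (0 : ℝ) < k := by
            exact_mod_cast Nat.pos_of_ne_zero hk0
          rw [div_le_div_iff_of_pos_right hk']
          exact_mod_cast hμk
        have hkpos : (0 : ℝ) < 1 / (k : ℝ) := by
          have hk' : (0 : ℝ) < k := by exact_mod_cast Nat.pos_of_ne_zero hk0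
          positivity
        rw [hfa] at hfa'
        exact absurd hfa' (not_le.2 hkpos)
    · -- `a ∈ N → f a = 0`
      intro haN
      have hμsmall : ∀ n : ℕ, -1 ≤ μ a n ∧ μ a n ≤ 0 := by
        intro n
        have hpow : (a : G) ^ n ∈ N := N.pow_mem haN n
        obtain ⟨hlow, hhigh⟩ := hsmall _ hpow
        constructor
        · refine hμmax a n (-1) ?_
          rw [zpow_neg, zpow_one]
          exact hlow
        · by_contra hc
          push_neg at hc
          have h1' : g ^ (1 : ℤ) ≤ (a : G) ^ n :=
            le_trans (zpow_mono_my h1g (by omega)) (hμ1 a n)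
          rw [zpow_one] at h1'
          exact absurd hhigh (not_lt.2 h1')
      have htend0 : Tendsto (fun n : ℕ => (μ a n : ℝ) / n) atTop (𝓝 0) := by
        have hlow : ∀ n : ℕ, -(1 : ℝ) / n ≤ (μ a n : ℝ) / n := by
          intro n
          rcases Nat.eq_zero_or_pos n with rfl | hn
          · simp
          · have hn' : (0 : ℝ) < n := by exact_mod_cast hn
            rw [div_le_div_iff_of_pos_right hn']
            exact_mod_cast (hμsmall n).1
        have hhigh : ∀ n : ℕ, (μ a n : ℝ) / n ≤ 0 := by
          intro n
          have h1 : (μ a n : ℝ) ≤ 0 := by exact_mod_cast (hμsmall n).2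
          have h2 : (0:ℝ) ≤ (n:ℝ) := Nat.cast_nonneg n
          exact div_nonpos_of_nonpos_of_nonneg h1 h2
        have h1 : Tendsto (fun n : ℕ => -(1 : ℝ) / n) atTop (𝓝 0) :=
          tendsto_const_div_atTop_nhds_zero_nat (-1)
        exact tendsto_of_tendsto_of_tendsto_of_le_of_le h1 tendsto_const_nhds hlow hhigh
      exact tendsto_nhds_unique (hftend a) htend0
  exact ⟨f, hadd, hmono, hker⟩
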